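/- Let λ > 0 and let x_t(i) ∈ ℝ^d for t ∈ [T], i ∈ [k] satisfy ‖x_t(i)‖₂ ≤ L. Define V_t = λI + Σ_{s=1}^t Σ_{i=1}^k x_s(i) x_s(i)ᵀ. Then the number of pairs (t,i) with x_t(i)ᵀ V_{t-1}^{-1} x_t(i) > 1/k is at most 2dk · log(1 + L²kT/(dλ)). -/

import Mathlib

set_option linter.unusedSectionVars false
set_option maxHeartbeats 1000000

open Matrix

section Helpers
variable {n : Type*} [Fintype n] [DecidableEq n]

lemma psd_vecMulVec (x : n → ℝ) : (vecMulVec x x).PosSemidef := by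
  have h : vecMulVec x x = (replicateRow Unit x)ᴴ * replicateRow Unit x := by
    rw [conjTranspose_replicateRow, vecMulVec_eq Unit, star_trivial]
  rw [h]; exact posSemidef_conjTranspose_mul_self _

lemma trace_eq_sum_eigs {A : Matrix n n ℝ} (hA : A.IsHermitian) :
    A.trace = ∑ i, hA.eigenvalues i := by
  conv_lhs => rw [hA.spectral_theorem, Unitary.conjStarAlgAut_apply]
  rw [trace_mul_cycle]
  simp [trace_diagonal, Matrix.mem_unitaryGroup_iff'.mp (hA.eigenvectorUnitary).2, Unitary.coe_star_mul_self]

lemma one_add_sum_le_prod {ι : Type*} (s : Finset ι) (f : ι → ℝ) (h : ∀ i ∈ s, 0 ≤ f i) :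
    1 + ∑ i ∈ s, f i ≤ ∏ i ∈ s, (1 + f i) := by
  induction s using Finset.cons_induction with
  | empty => simp
  | cons a s ha ih =>
    rw [Finset.sum_cons, Finset.prod_cons]
    have h1 : 0 ≤ f a := h a (Finset.mem_cons_self a s)
    have h2 : ∀ i ∈ s, 0 ≤ f i := fun i hi => h i (Finset.mem_cons_of_mem hi)
    have h3 := ih h2
    nlinarith [Finset.sum_nonneg h2]

lemma psd_sum {ι : Type*} (s : Finset ι) (f : ι → Matrix n n ℝ)
    (h : ∀ i ∈ s, (f i).PosSemidef) : (∑ i ∈ s, f i).PosSemidef := by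
  induction s using Finset.cons_induction with
  | empty => simpa using Matrix.PosSemidef.zero
  | cons a s ha ih =>
    rw [Finset.sum_cons]
    exact (h a (Finset.mem_cons_self a s)).add (ih fun i hi => h i (Finset.mem_cons_of_mem hi))

lemma det_one_add_psd {N : Matrix n n ℝ} (hN : N.PosSemidef) :
    1 + N.trace ≤ (1 + N).det := by
  have hH := hN.1
  set U := (hH.eigenvectorUnitary : Matrix n n ℝ) with hUdef
  have hU : U * star U = 1 := Matrix.mem_unitaryGroup_iff.mp hH.eigenvectorUnitary.2
  have hsp : (1 : Matrix n n ℝ) + N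
      = U * (1 + diagonal (RCLike.ofReal ∘ hH.eigenvalues)) * star U := by
    rw [mul_add, mul_one, add_mul, hU]
    congr 1; exact hH.spectral_theorem
  have hdet : (1 + N).det = ∏ i, (1 + hH.eigenvalues i) := by
    rw [hsp, det_mul_right_comm, hU, one_mul]
    have : (1 : Matrix n n ℝ) + diagonal (RCLike.ofReal ∘ hH.eigenvalues)
        = diagonal (fun i => 1 + hH.eigenvalues i) := by
      rw [← diagonal_one, diagonal_add]
      congr 1
    rw [this, det_diagonal]
  rw [hdet, trace_eq_sum_eigs hH]
  exact one_add_sum_le_prod _ _ (fun i _ => hN.eigenvalues_nonneg i)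

lemma trace_mul_vecMulVec (A : Matrix n n ℝ) (x : n → ℝ) :
    (A * vecMulVec x x).trace = x ⬝ᵥ A *ᵥ x := by
  simp only [trace, diag, mul_apply, vecMulVec_apply, dotProduct, mulVec, Finset.mul_sum]
  exact Finset.sum_congr rfl fun i _ => Finset.sum_congr rfl fun j _ => by ring

open scoped MatrixOrder in
lemma det_add_psd {V M : Matrix n n ℝ} (hV : V.PosDef) (hM : M.PosSemidef) :
    V.det * (1 + (V⁻¹ * M).trace) ≤ (V + M).det := by
  have hVs := hV.posSemidef
  set S := CFC.sqrt V with hSdef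
  have hSpsd : S.PosSemidef := nonneg_iff_posSemidef.mp (CFC.sqrt_nonneg V)
  have hSS : S * S = V := CFC.sqrt_mul_sqrt_self V hVs.nonneg
  have hdetS : S.det * S.det = V.det := by rw [← det_mul, hSS]
  have hdS : S.det ≠ 0 := fun h => by
    have := hV.det_pos; rw [← hdetS, h, mul_zero] at this; exact lt_irrefl _ this
  have hdSnn : 0 ≤ S.det := by
    rw [hSpsd.1.det_eq_prod_eigenvalues]
    exact Finset.prod_nonneg fun i _ => hSpsd.eigenvalues_nonneg i
  have hunit : IsUnit S.det := isUnit_iff_ne_zero.mpr hdS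
  have hSinv : S * S⁻¹ = 1 := mul_nonsing_inv S hunit
  have hSinv' : S⁻¹ * S = 1 := nonsing_inv_mul S hunit
  have hSherm : (S⁻¹)ᴴ = S⁻¹ := (hSpsd.1.inv).eq
  set N := S⁻¹ * M * S⁻¹ with hNdef
  have hNpsd : N.PosSemidef := by
    have h := hM.mul_mul_conjTranspose_same S⁻¹
    rwa [hSherm] at h
  have hVM : V + M = S * (1 + N) * S := by
    rw [mul_add, mul_one, add_mul, hSS, hNdef]
    symm
    congr 1
    calc S * (S⁻¹ * M * S⁻¹) * S = (S * S⁻¹) * M * (S⁻¹ * S) := by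
          simp only [Matrix.mul_assoc]
      _ = M := by rw [hSinv, hSinv', Matrix.one_mul, Matrix.mul_one]
  have htr : N.trace = (V⁻¹ * M).trace := by
    rw [hNdef, trace_mul_cycle, ← Matrix.mul_inv_rev, hSS]
  have hkey := det_one_add_psd hNpsd
  calc V.det * (1 + (V⁻¹ * M).trace) = S.det * (1 + N.trace) * S.det := by
        rw [← hdetS, htr]; ring
    _ ≤ S.det * (1 + N).det * S.det := by
        apply mul_le_mul_of_nonneg_right _ hdSnn
        exact mul_le_mul_of_nonneg_left hkey hdSnn
    _ = (V + M).det := by rw [hVM, det_mul, det_mul]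

lemma det_le_trace_pow [Nonempty n] {A : Matrix n n ℝ} (hA : A.PosSemidef) :
    A.det ≤ (A.trace / (Fintype.card n)) ^ (Fintype.card n) := by
  set c := Fintype.card n with hc
  have hc0 : 0 < c := Fintype.card_pos
  have hcr : (0:ℝ) < c := by exact_mod_cast hc0
  set μ := hA.1.eigenvalues with hμdef
  have hμ : ∀ i, 0 ≤ μ i := hA.eigenvalues_nonneg
  have hdet : A.det = ∏ i, μ i := hA.1.det_eq_prod_eigenvalues
  have htr : A.trace = ∑ i, μ i := trace_eq_sum_eigs hA.1
  have hgm := Real.geom_mean_le_arith_mean_weighted Finset.univ (fun _ => 1/(c:ℝ)) μ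
    (fun i _ => by positivity) (by rw [Finset.sum_const, Finset.card_univ, ← hc, nsmul_eq_mul]; exact mul_one_div_cancel (ne_of_gt hcr)) (fun i _ => hμ i)
  have hpow : (∏ i, μ i ^ (1/(c:ℝ))) ^ c = ∏ i, μ i := by
    rw [← Finset.prod_pow]
    refine Finset.prod_congr rfl fun i _ => ?_
    rw [← Real.rpow_natCast (μ i ^ (1/(c:ℝ))) c, ← Real.rpow_mul (hμ i)]
    rw [one_div_mul_cancel (ne_of_gt hcr), Real.rpow_one]
  have hbase : 0 ≤ ∏ i, μ i ^ (1/(c:ℝ)) :=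
    Finset.prod_nonneg fun i _ => Real.rpow_nonneg (hμ i) _
  have hsum : ∑ i, (1/(c:ℝ)) * μ i = A.trace / c := by
    rw [htr, Finset.sum_div]
    exact Finset.sum_congr rfl fun i _ => by ring
  calc A.det = (∏ i, μ i ^ (1/(c:ℝ))) ^ c := by rw [hpow, hdet]
    _ ≤ (A.trace / c) ^ c := by
        apply pow_le_pow_left₀ hbase
        rw [← hsum]; exact hgm

lemma half_le_log {u : ℝ} (h0 : 0 ≤ u) (h1 : u ≤ 1) : u / 2 ≤ Real.log (1 + u) := by
  have hpos : (0:ℝ) < 1 + u := by linarith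
  have h := Real.log_le_sub_one_of_pos (show (0:ℝ) < (1+u)⁻¹ by positivity)
  rw [Real.log_inv] at h
  have h2 : u / (1+u) ≤ Real.log (1+u) := by
    have : u / (1+u) = 1 - (1+u)⁻¹ := by field_simp; ring
    rw [this]; linarith
  refine le_trans ?_ h2
  rw [div_le_div_iff₀ (by norm_num) hpos]
  nlinarith

end Helpers

theorem count_large_widths {d k T : ℕ} (hd : 0 < d) (hk : 0 < k)
    (L lam : ℝ) (hlam : 0 < lam) (x : ℕ → ℕ → (Fin d → ℝ))
    (hL : ∀ t ∈ Finset.range T, ∀ i ∈ Finset.range k, Real.sqrt (∑ j, (x t i j) ^ 2) ≤ L)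
    (V : ℕ → Matrix (Fin d) (Fin d) ℝ)
    (hV : ∀ t, V t = lam • (1 : Matrix (Fin d) (Fin d) ℝ) +
      ∑ s ∈ Finset.range t, ∑ i ∈ Finset.range k, vecMulVec (x s i) (x s i)) :
    (((Finset.range T ×ˢ Finset.range k).filter
        (fun p => x p.1 p.2 ⬝ᵥ (V p.1)⁻¹ *ᵥ x p.1 p.2 > 1 / (k : ℝ))).card : ℝ) ≤
      2 * d * k * Real.log (1 + L ^ 2 * k * T / (d * lam)) := by
  haveI : Nonempty (Fin d) := Fin.pos_iff_nonempty.mp hd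
  have hkr : (0:ℝ) < k := by exact_mod_cast hk
  have hdr : (0:ℝ) < d := by exact_mod_cast hd
  -- positive definiteness
  have hpsdM : ∀ t, (∑ i ∈ Finset.range k, vecMulVec (x t i) (x t i)).PosSemidef :=
    fun t => psd_sum _ _ fun i _ => psd_vecMulVec _
  have hpd : ∀ t, (V t).PosDef := by
    intro t
    rw [hV t]
    apply Matrix.PosDef.add_posSemidef
    · have h1 : lam • (1 : Matrix (Fin d) (Fin d) ℝ) = diagonal (fun _ => lam) :=
        Matrix.smul_one_eq_diagonal lam
      rw [h1]
      exact Matrix.PosDef.diagonal fun i => hlam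
    · exact psd_sum _ _ fun s _ => hpsdM s
  -- per-round count
  set nn : ℕ → ℕ := fun t => ((Finset.range k).filter
      (fun i => x t i ⬝ᵥ (V t)⁻¹ *ᵥ x t i > 1/(k:ℝ))).card with hnn
  have hcount : ((Finset.range T ×ˢ Finset.range k).filter
      (fun p => x p.1 p.2 ⬝ᵥ (V p.1)⁻¹ *ᵥ x p.1 p.2 > 1/(k:ℝ))).card
      = ∑ t ∈ Finset.range T, nn t := by
    rw [Finset.card_filter, Finset.sum_product]
    exact Finset.sum_congr rfl fun t _ => (Finset.card_filter _ _).symm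
  have hstep : ∀ t, V (t+1) = V t + ∑ i ∈ Finset.range k, vecMulVec (x t i) (x t i) := by
    intro t; rw [hV (t+1), hV t, Finset.sum_range_succ, add_assoc]
  -- per-round log inequality
  have hround : ∀ t, (nn t : ℝ)/(2*(k:ℝ)) + Real.log (V t).det ≤ Real.log (V (t+1)).det := by
    intro t
    set M := ∑ i ∈ Finset.range k, vecMulVec (x t i) (x t i) with hM
    have hdd := det_add_psd (hpd t) (hpsdM t)
    rw [← hstep t] at hdd
    have htrS : ((V t)⁻¹ * M).trace = ∑ i ∈ Finset.range k, x t i ⬝ᵥ (V t)⁻¹ *ᵥ x t i := by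
      rw [hM, Finset.mul_sum, trace_sum]
      exact Finset.sum_congr rfl fun i _ => trace_mul_vecMulVec _ _
    have hnonneg : ∀ i ∈ Finset.range k, 0 ≤ x t i ⬝ᵥ (V t)⁻¹ *ᵥ x t i := by
      intro i _
      have h := ((hpd t).inv.posSemidef).dotProduct_mulVec_nonneg (x t i)
      simpa using h
    have hSlb : (nn t : ℝ)/(k:ℝ) ≤ ((V t)⁻¹ * M).trace := by
      rw [htrS]
      calc (nn t : ℝ)/(k:ℝ)
          = ∑ _i ∈ ((Finset.range k).filter
              (fun i => x t i ⬝ᵥ (V t)⁻¹ *ᵥ x t i > 1/(k:ℝ))), (1/(k:ℝ)) := by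
            rw [Finset.sum_const, nsmul_eq_mul, hnn]
            ring
        _ ≤ ∑ i ∈ ((Finset.range k).filter
              (fun i => x t i ⬝ᵥ (V t)⁻¹ *ᵥ x t i > 1/(k:ℝ))),
              x t i ⬝ᵥ (V t)⁻¹ *ᵥ x t i :=
            Finset.sum_le_sum fun i hi => le_of_lt (Finset.mem_filter.mp hi).2
        _ ≤ ∑ i ∈ Finset.range k, x t i ⬝ᵥ (V t)⁻¹ *ᵥ x t i :=
            Finset.sum_le_sum_of_subset_of_nonneg (Finset.filter_subset _ _)
              (fun i hi _ => hnonneg i hi)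
    have hnk : (nn t : ℝ) ≤ (k:ℝ) := by
      have : nn t ≤ k := le_trans (Finset.card_filter_le _ _) (le_of_eq (Finset.card_range k))
      exact_mod_cast this
    have hu0 : (0:ℝ) ≤ (nn t : ℝ)/(k:ℝ) := by positivity
    have hu1 : (nn t : ℝ)/(k:ℝ) ≤ 1 := by rw [div_le_one hkr]; exact hnk
    have hlog2 : (nn t:ℝ)/(2*(k:ℝ)) ≤ Real.log (1 + ((V t)⁻¹ * M).trace) := by
      have hu := half_le_log hu0 hu1
      have hmono : Real.log (1 + (nn t:ℝ)/(k:ℝ)) ≤ Real.log (1 + ((V t)⁻¹*M).trace) :=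
        Real.log_le_log (by positivity) (by linarith)
      have heq : (nn t:ℝ)/(2*(k:ℝ)) = ((nn t:ℝ)/(k:ℝ))/2 := by ring
      rw [heq]
      exact le_trans hu hmono
    have hdp := (hpd t).det_pos
    have hdp1 := (hpd (t+1)).det_pos
    have htrnn : 0 ≤ ((V t)⁻¹ * M).trace := le_trans hu0 hSlb
    have hlog1 : Real.log ((V t).det * (1 + ((V t)⁻¹ * M).trace)) ≤ Real.log (V (t+1)).det :=
      Real.log_le_log (by positivity) hdd
    rw [Real.log_mul (ne_of_gt hdp) (by positivity)] at hlog1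
    linarith
  -- telescoping
  have htel : ∑ t ∈ Finset.range T, (nn t:ℝ)/(2*(k:ℝ))
      ≤ Real.log (V T).det - Real.log (V 0).det := by
    rw [← Finset.sum_range_sub (fun t => Real.log (V t).det) T]
    exact Finset.sum_le_sum fun t _ => by linarith [hround t]
  -- trace bound
  have htrT : (V T).trace ≤ (d:ℝ)*lam + L^2*(k:ℝ)*(T:ℝ) := by
    rw [hV T, trace_add, trace_smul, trace_one]
    have hbound : ∑ s ∈ Finset.range T, (∑ i ∈ Finset.range k,
        vecMulVec (x s i) (x s i)).trace ≤ (T:ℝ) * ((k:ℝ) * L^2) := by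
      calc ∑ s ∈ Finset.range T, (∑ i ∈ Finset.range k, vecMulVec (x s i) (x s i)).trace
          ≤ ∑ _s ∈ Finset.range T, (k:ℝ) * L^2 := by
            apply Finset.sum_le_sum
            intro s hs
            rw [trace_sum]
            calc ∑ i ∈ Finset.range k, (vecMulVec (x s i) (x s i)).trace
                ≤ ∑ _i ∈ Finset.range k, L^2 := by
                  apply Finset.sum_le_sum
                  intro i hi
                  have h1 : (vecMulVec (x s i) (x s i)).trace = ∑ j, (x s i j)^2 := by
                    simp [trace, diag, vecMulVec_apply, sq]
                  rw [h1]
                  have h2 := hL s hs i hi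
                  have h3 : (0:ℝ) ≤ ∑ j, (x s i j)^2 := by positivity
                  nlinarith [Real.sq_sqrt h3, Real.sqrt_nonneg (∑ j, (x s i j)^2)]
              _ = (k:ℝ) * L^2 := by rw [Finset.sum_const, Finset.card_range, nsmul_eq_mul]
        _ = (T:ℝ) * ((k:ℝ) * L^2) := by rw [Finset.sum_const, Finset.card_range, nsmul_eq_mul]
    rw [trace_sum]
    have : lam • ((Fintype.card (Fin d) : ℝ)) = (d:ℝ) * lam := by
      rw [Fintype.card_fin, smul_eq_mul]; ring
    rw [this]
    nlinarith [hbound]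
  have hL2nn : (0:ℝ) ≤ L^2*(k:ℝ)*(T:ℝ) := by positivity
  have htrVnn : (0:ℝ) ≤ (V T).trace := by
    rw [trace_eq_sum_eigs (hpd T).1]
    exact Finset.sum_nonneg fun i _ => (hpd T).posSemidef.eigenvalues_nonneg i
  -- determinant / log bound
  have h5 := det_le_trace_pow (hpd T).posSemidef
  rw [Fintype.card_fin] at h5
  have h6 : (V T).det ≤ (((d:ℝ)*lam + L^2*(k:ℝ)*(T:ℝ))/(d:ℝ))^d := by
    refine le_trans h5 (pow_le_pow_left₀ (by positivity) ?_ d)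
    gcongr
  have hApos : (0:ℝ) < (d:ℝ)*lam + L^2*(k:ℝ)*(T:ℝ) := by positivity
  have hlogT : Real.log (V T).det
      ≤ (d:ℝ) * Real.log (((d:ℝ)*lam + L^2*(k:ℝ)*(T:ℝ))/(d:ℝ)) := by
    calc Real.log (V T).det
        ≤ Real.log ((((d:ℝ)*lam + L^2*(k:ℝ)*(T:ℝ))/(d:ℝ))^d) :=
          Real.log_le_log (hpd T).det_pos h6
      _ = (d:ℝ) * Real.log (((d:ℝ)*lam + L^2*(k:ℝ)*(T:ℝ))/(d:ℝ)) := by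
          rw [Real.log_pow]
  have hV0 : (V 0).det = lam^d := by
    rw [hV 0]
    simp [det_smul, Fintype.card_fin]
  have hlog0 : Real.log (V 0).det = (d:ℝ) * Real.log lam := by
    rw [hV0, Real.log_pow]
  have heq : Real.log (((d:ℝ)*lam + L^2*(k:ℝ)*(T:ℝ))/(d:ℝ)) - Real.log lam
      = Real.log (1 + L^2*(k:ℝ)*(T:ℝ)/((d:ℝ)*lam)) := by
    rw [← Real.log_div (by positivity) (ne_of_gt hlam)]
    congr 1
    field_simp
  have hfin : Real.log (V T).det - Real.log (V 0).det
      ≤ (d:ℝ) * Real.log (1 + L^2*(k:ℝ)*(T:ℝ)/((d:ℝ)*lam)) := by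
    calc Real.log (V T).det - Real.log (V 0).det
        ≤ (d:ℝ)*Real.log (((d:ℝ)*lam + L^2*(k:ℝ)*(T:ℝ))/(d:ℝ)) - (d:ℝ)*Real.log lam := by
          rw [hlog0]; linarith
      _ = (d:ℝ) * (Real.log (((d:ℝ)*lam + L^2*(k:ℝ)*(T:ℝ))/(d:ℝ)) - Real.log lam) := by
          ring
      _ = (d:ℝ) * Real.log (1 + L^2*(k:ℝ)*(T:ℝ)/((d:ℝ)*lam)) := by rw [heq]
  rw [hcount]
  push_cast
  have h7 : (∑ t ∈ Finset.range T, (nn t:ℝ))/(2*(k:ℝ))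
      ≤ (d:ℝ) * Real.log (1 + L^2*(k:ℝ)*(T:ℝ)/((d:ℝ)*lam)) := by
    rw [Finset.sum_div]
    exact le_trans htel (by linarith)
  rw [div_le_iff₀ (by positivity)] at h7
  calc ∑ t ∈ Finset.range T, (nn t:ℝ)
      ≤ (d:ℝ) * Real.log (1 + L^2*(k:ℝ)*(T:ℝ)/((d:ℝ)*lam)) * (2*(k:ℝ)) := h7
    _ = 2 * (d:ℝ) * (k:ℝ) * Real.log (1 + L^2*(k:ℝ)*(T:ℝ)/((d:ℝ)*lam)) := by ring
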